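/- arXiv:1001.0085 — 2 statements merged into one kernel-verified Lean document; each statement's English description precedes it below -/
import Mathlib

section
/- For n×n positive definite complex matrices A, B and n×n positive semidefinite complex matrices C, D, writing T = Tr[(C−D)(B+D)⁻¹(A−B)(A+C)⁻¹] (a real number), one has Tr[(A−B)(B⁻¹−A⁻¹) + (C−D)((B+D)⁻¹−(A+C)⁻¹)] ≥ 2·|T| + T. -/
open Matrix ComplexOrder

private lemma psd_trace_nonneg {n : ℕ} {M : Matrix (Fin n) (Fin n) ℂ} (hM : M.PosSemidef) :
    0 ≤ M.trace := by
  exact hM.trace_nonneg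

open scoped MatrixOrder in
noncomputable def Matrix.PosSemidef.sqrt {n : ℕ} {S : Matrix (Fin n) (Fin n) ℂ}
    (_hS : S.PosSemidef) : Matrix (Fin n) (Fin n) ℂ := CFC.sqrt S

open scoped MatrixOrder in
lemma Matrix.PosSemidef.posSemidef_sqrt {n : ℕ} {S : Matrix (Fin n) (Fin n) ℂ}
    (hS : S.PosSemidef) : hS.sqrt.PosSemidef :=
  (CFC.sqrt_nonneg S).posSemidef

open scoped MatrixOrder in
lemma Matrix.PosSemidef.sqrt_mul_self {n : ℕ} {S : Matrix (Fin n) (Fin n) ℂ}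
    (hS : S.PosSemidef) : hS.sqrt * hS.sqrt = S :=
  CFC.sqrt_mul_sqrt_self S hS.nonneg

private lemma cross_eq {n : ℕ} {S R : Matrix (Fin n) (Fin n) ℂ} (X Y : Matrix (Fin n) (Fin n) ℂ)
    (hX : X.IsHermitian) (hY : Y.IsHermitian) (hS : S.PosSemidef) (hR : R.PosSemidef) :
    ((hS.sqrt * Y * hR.sqrt)ᴴ * (hS.sqrt * X * hR.sqrt)).trace = (Y * S * X * R).trace := by
  have hsh : hS.sqrtᴴ = hS.sqrt := hS.posSemidef_sqrt.1
  have hrh : hR.sqrtᴴ = hR.sqrt := hR.posSemidef_sqrt.1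
  have h1 : (hS.sqrt * Y * hR.sqrt)ᴴ = hR.sqrt * Y * hS.sqrt := by
    rw [conjTranspose_mul, conjTranspose_mul, hsh, hrh, hY.eq]
    noncomm_ring
  have h2 : hR.sqrt * Y * hS.sqrt * (hS.sqrt * X * hR.sqrt)
      = hR.sqrt * (Y * S * X * hR.sqrt) := by
    conv_rhs => rw [← hS.sqrt_mul_self]
    noncomm_ring
  rw [h1, h2, Matrix.trace_mul_comm, mul_assoc, hR.sqrt_mul_self]

private lemma sandwich_nonneg {n : ℕ} {S R : Matrix (Fin n) (Fin n) ℂ}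
    (X : Matrix (Fin n) (Fin n) ℂ) (hX : X.IsHermitian) (hS : S.PosSemidef) (hR : R.PosSemidef) :
    0 ≤ (X * S * X * R).trace := by
  rw [← cross_eq X X hX hX hS hR]
  exact psd_trace_nonneg (posSemidef_conjTranspose_mul_self _)

private lemma inv_sub_inv_psd {n : ℕ} {B D : Matrix (Fin n) (Fin n) ℂ}
    (hB : B.PosDef) (hD : D.PosSemidef) : (B⁻¹ - (B + D)⁻¹).PosSemidef := by
  have hBD : (B + D).PosDef := hB.add_posSemidef hD
  have hdB : IsUnit B.det := hB.det_pos.ne'.isUnit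
  have hdBD : IsUnit (B + D).det := hBD.det_pos.ne'.isUnit
  have e1 : (B + D) * (B + D)⁻¹ = 1 := Matrix.mul_nonsing_inv _ hdBD
  have e2 : (B + D)⁻¹ * (B + D) = 1 := Matrix.nonsing_inv_mul _ hdBD
  have e3 : B * B⁻¹ = 1 := Matrix.mul_nonsing_inv _ hdB
  have e4 : B⁻¹ * B = 1 := Matrix.nonsing_inv_mul _ hdB
  have k1 : B⁻¹ - (B + D)⁻¹ = (B + D)⁻¹ * D * B⁻¹ := by
    calc B⁻¹ - (B + D)⁻¹
        = (B + D)⁻¹ * (B + D) * B⁻¹ - (B + D)⁻¹ * (B * B⁻¹) := by rw [e2, e3, one_mul, mul_one]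
      _ = (B + D)⁻¹ * D * B⁻¹ := by noncomm_ring
  have k3 : D + D * B⁻¹ * D = D * B⁻¹ * (B + D) := by
    rw [Matrix.mul_add, mul_assoc D B⁻¹ B, e4, mul_one]
  have k2 : (B + D)⁻¹ * D * B⁻¹ = (B + D)⁻¹ * (D + D * B⁻¹ * D) * (B + D)⁻¹ := by
    rw [k3]
    calc (B + D)⁻¹ * D * B⁻¹
        = (B + D)⁻¹ * (D * B⁻¹) * 1 := by noncomm_ring
      _ = (B + D)⁻¹ * (D * B⁻¹) * ((B + D) * (B + D)⁻¹) := by rw [e1]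
      _ = (B + D)⁻¹ * (D * B⁻¹ * (B + D)) * (B + D)⁻¹ := by noncomm_ring
  have hE : (D + D * B⁻¹ * D).PosSemidef := by
    refine hD.add ?_
    have h := (hB.inv.posSemidef).conjTranspose_mul_mul_same D
    rwa [hD.1] at h
  have h := hE.conjTranspose_mul_mul_same (B + D)⁻¹
  rw [hBD.inv.posSemidef.1] at h
  rw [k1, k2]
  exact h

private lemma main_core {n : ℕ} (X Y Bi Ai P Q : Matrix (Fin n) (Fin n) ℂ)
    (hXh : X.IsHermitian) (hYh : Y.IsHermitian)
    (hP : P.PosSemidef) (hQ : Q.PosSemidef) (hAi : Ai.PosSemidef)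
    (hBP : (Bi - P).PosSemidef) (hAQ : (Ai - Q).PosSemidef)
    (hid1 : Bi - Ai = Bi * X * Ai)
    (hid2 : P - Q = P * (X + Y) * Q)
    (hid3 : Q * (X + Y) * P = P * (X + Y) * Q) :
    ((Y * P * X * Q).trace).im = 0 ∧
    ((X * (Bi - Ai) + Y * (P - Q)).trace).im = 0 ∧
    ((X * (Bi - Ai) + Y * (P - Q)).trace).re ≥
      2 * |((Y * P * X * Q).trace).re| + ((Y * P * X * Q).trace).re := by
  have hPh : Pᴴ = P := hP.1
  have hQh : Qᴴ = Q := hQ.1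
  -- T is real
  have hTstar : star ((Y * P * X * Q).trace) = (Y * P * X * Q).trace := by
    have h1 : (Y * P * X * Q)ᴴ = Q * X * P * Y := by
      rw [conjTranspose_mul, conjTranspose_mul, conjTranspose_mul, hYh.eq, hPh, hXh.eq, hQh]
      noncomm_ring
    have h2 : (Q * X * P * Y).trace = (Y * (Q * X * P)).trace := by
      rw [Matrix.trace_mul_comm]
    have c1 : (Y * (Q * (X + Y) * P)).trace = (Y * (P * (X + Y) * Q)).trace := by rw [hid3]
    have c2 : Y * (Q * (X + Y) * P) = Y * (Q * X * P) + Y * Q * Y * P := by noncomm_ring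
    have c3 : Y * (P * (X + Y) * Q) = Y * P * X * Q + Y * P * Y * Q := by noncomm_ring
    have c4 : (Y * Q * Y * P).trace = (Y * P * Y * Q).trace := by
      calc (Y * Q * Y * P).trace = ((Y * Q) * (Y * P)).trace := by rw [mul_assoc]
        _ = ((Y * P) * (Y * Q)).trace := Matrix.trace_mul_comm _ _
        _ = (Y * P * Y * Q).trace := by rw [← mul_assoc]
    rw [c2, c3, Matrix.trace_add, Matrix.trace_add] at c1
    calc star ((Y * P * X * Q).trace) = ((Y * P * X * Q)ᴴ).trace :=
          (Matrix.trace_conjTranspose _).symm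
      _ = (Y * (Q * X * P)).trace := by rw [h1, h2]
      _ = (Y * P * X * Q).trace := by linear_combination c1 - c4
  have hTim : ((Y * P * X * Q).trace).im = 0 := by
    rw [← Complex.conj_eq_iff_im]
    exact hTstar
  -- trace decomposition
  have hdec : (X * (Bi - Ai) + Y * (P - Q)).trace
      = (X * Bi * X * Ai).trace + ((Y * P * X * Q).trace + (Y * P * Y * Q).trace) := by
    rw [hid1, hid2]
    have e : X * (Bi * X * Ai) + Y * (P * (X + Y) * Q)
        = X * Bi * X * Ai + (Y * P * X * Q + Y * P * Y * Q) := by noncomm_ring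
    rw [e, Matrix.trace_add, Matrix.trace_add]
  -- nonneg pieces
  have h1' : 0 ≤ (X * P * X * Q).trace := sandwich_nonneg X hXh hP hQ
  have h2 : 0 ≤ (Y * P * Y * Q).trace := sandwich_nonneg Y hYh hP hQ
  have h3 : 0 ≤ (X * (Bi - P) * X * Ai).trace := sandwich_nonneg X hXh hBP hAi
  have h4 : 0 ≤ (X * P * X * (Ai - Q)).trace := sandwich_nonneg X hXh hP hAQ
  have h5 : (X * Bi * X * Ai).trace
      = (X * P * X * Q).trace + (X * (Bi - P) * X * Ai).trace
        + (X * P * X * (Ai - Q)).trace := by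
    have e : X * Bi * X * Ai
        = X * P * X * Q + X * (Bi - P) * X * Ai + X * P * X * (Ai - Q) := by noncomm_ring
    rw [e, Matrix.trace_add, Matrix.trace_add]
  -- Cauchy-Schwarz via sqrt
  have hUU := cross_eq X X hXh hXh hP hQ
  have hVV := cross_eq Y Y hYh hYh hP hQ
  have hVU := cross_eq X Y hXh hYh hP hQ
  set U := hP.sqrt * X * hQ.sqrt with hUdef
  set V := hP.sqrt * Y * hQ.sqrt with hVdef
  have hUV : (Uᴴ * V).trace = star ((Vᴴ * U).trace) := by
    have e : Uᴴ * V = (Vᴴ * U)ᴴ := by rw [conjTranspose_mul Vᴴ U, conjTranspose_conjTranspose]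
    rw [e, Matrix.trace_conjTranspose]
  have hplus : 0 ≤ ((U + V)ᴴ * (U + V)).trace :=
    psd_trace_nonneg (posSemidef_conjTranspose_mul_self _)
  have hminus : 0 ≤ ((U - V)ᴴ * (U - V)).trace :=
    psd_trace_nonneg (posSemidef_conjTranspose_mul_self _)
  have eplus : ((U + V)ᴴ * (U + V)).trace
      = (Uᴴ * U).trace + (Uᴴ * V).trace + (Vᴴ * U).trace + (Vᴴ * V).trace := by
    rw [conjTranspose_add]
    have e : (Uᴴ + Vᴴ) * (U + V) = Uᴴ * U + Uᴴ * V + Vᴴ * U + Vᴴ * V := by noncomm_ring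
    rw [e, Matrix.trace_add, Matrix.trace_add, Matrix.trace_add]
  have eminus : ((U - V)ᴴ * (U - V)).trace
      = (Uᴴ * U).trace - (Uᴴ * V).trace - (Vᴴ * U).trace + (Vᴴ * V).trace := by
    rw [conjTranspose_sub]
    have e : (Uᴴ - Vᴴ) * (U - V) = Uᴴ * U - Uᴴ * V - Vᴴ * U + Vᴴ * V := by noncomm_ring
    rw [e, Matrix.trace_add, Matrix.trace_sub, Matrix.trace_sub]
  rw [eplus, hUV, hVU, hUU, hVV, hTstar] at hplus
  rw [eminus, hUV, hVU, hUU, hVV, hTstar] at hminus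
  -- extract real parts
  obtain ⟨hpr, -⟩ := Complex.nonneg_iff.mp hplus
  obtain ⟨hmr, -⟩ := Complex.nonneg_iff.mp hminus
  obtain ⟨h1r, h1i⟩ := Complex.nonneg_iff.mp h1'
  obtain ⟨h2r, h2i⟩ := Complex.nonneg_iff.mp h2
  obtain ⟨h3r, h3i⟩ := Complex.nonneg_iff.mp h3
  obtain ⟨h4r, h4i⟩ := Complex.nonneg_iff.mp h4
  simp only [Complex.add_re, Complex.sub_re] at hpr hmr
  refine ⟨hTim, ?_, ?_⟩
  · rw [hdec, h5]
    simp only [Complex.add_im]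
    linarith
  · rw [hdec, h5]
    simp only [Complex.add_re]
    rcases abs_cases ((Y * P * X * Q).trace).re with ⟨he, -⟩ | ⟨he, -⟩ <;> rw [he] <;> linarith

theorem trace_lower_bound_2T_plus_T {n : ℕ} (A B C D : Matrix (Fin n) (Fin n) ℂ)
    (hA : A.PosDef) (hB : B.PosDef) (hC : C.PosSemidef) (hD : D.PosSemidef) :
    (((C - D) * (B + D)⁻¹ * (A - B) * (A + C)⁻¹).trace).im = 0 ∧
    (((A - B) * (B⁻¹ - A⁻¹) + (C - D) * ((B + D)⁻¹ - (A + C)⁻¹)).trace).im = 0 ∧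
    (((A - B) * (B⁻¹ - A⁻¹) + (C - D) * ((B + D)⁻¹ - (A + C)⁻¹)).trace).re ≥
      2 * |(((C - D) * (B + D)⁻¹ * (A - B) * (A + C)⁻¹).trace).re| +
        (((C - D) * (B + D)⁻¹ * (A - B) * (A + C)⁻¹).trace).re := by
  have hBD : (B + D).PosDef := hB.add_posSemidef hD
  have hAC : (A + C).PosDef := hA.add_posSemidef hC
  have eA1 : A * A⁻¹ = 1 := Matrix.mul_nonsing_inv _ hA.det_pos.ne'.isUnit
  have eB2 : B⁻¹ * B = 1 := Matrix.nonsing_inv_mul _ hB.det_pos.ne'.isUnit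
  have eAC1 : (A + C) * (A + C)⁻¹ = 1 := Matrix.mul_nonsing_inv _ hAC.det_pos.ne'.isUnit
  have eAC2 : (A + C)⁻¹ * (A + C) = 1 := Matrix.nonsing_inv_mul _ hAC.det_pos.ne'.isUnit
  have eBD1 : (B + D) * (B + D)⁻¹ = 1 := Matrix.mul_nonsing_inv _ hBD.det_pos.ne'.isUnit
  have eBD2 : (B + D)⁻¹ * (B + D) = 1 := Matrix.nonsing_inv_mul _ hBD.det_pos.ne'.isUnit
  have hXY : (A - B) + (C - D) = (A + C) - (B + D) := by abel
  have hid1 : B⁻¹ - A⁻¹ = B⁻¹ * (A - B) * A⁻¹ := by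
    calc B⁻¹ - A⁻¹ = B⁻¹ * (A * A⁻¹) - B⁻¹ * B * A⁻¹ := by
          rw [eA1, eB2, mul_one, one_mul]
      _ = B⁻¹ * (A - B) * A⁻¹ := by noncomm_ring
  have hid2 : (B + D)⁻¹ - (A + C)⁻¹ = (B + D)⁻¹ * ((A - B) + (C - D)) * (A + C)⁻¹ := by
    rw [hXY]
    calc (B + D)⁻¹ - (A + C)⁻¹
        = (B + D)⁻¹ * ((A + C) * (A + C)⁻¹) - (B + D)⁻¹ * (B + D) * (A + C)⁻¹ := by
          rw [eAC1, eBD2, mul_one, one_mul]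
      _ = (B + D)⁻¹ * ((A + C) - (B + D)) * (A + C)⁻¹ := by noncomm_ring
  have hid3 : (A + C)⁻¹ * ((A - B) + (C - D)) * (B + D)⁻¹
      = (B + D)⁻¹ * ((A - B) + (C - D)) * (A + C)⁻¹ := by
    rw [hXY]
    calc (A + C)⁻¹ * ((A + C) - (B + D)) * (B + D)⁻¹
        = (A + C)⁻¹ * (A + C) * (B + D)⁻¹ - (A + C)⁻¹ * ((B + D) * (B + D)⁻¹) := by
          noncomm_ring
      _ = (B + D)⁻¹ - (A + C)⁻¹ := by rw [eAC2, eBD1, mul_one, one_mul]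
      _ = (B + D)⁻¹ * ((A + C) - (B + D)) * (A + C)⁻¹ := by
          calc (B + D)⁻¹ - (A + C)⁻¹
              = (B + D)⁻¹ * ((A + C) * (A + C)⁻¹) - (B + D)⁻¹ * (B + D) * (A + C)⁻¹ := by
                rw [eAC1, eBD2, mul_one, one_mul]
            _ = (B + D)⁻¹ * ((A + C) - (B + D)) * (A + C)⁻¹ := by noncomm_ring
  exact main_core (A - B) (C - D) B⁻¹ A⁻¹ (B + D)⁻¹ (A + C)⁻¹
    (hA.1.sub hB.1) (hC.1.sub hD.1)
    hBD.inv.posSemidef hAC.inv.posSemidef hA.inv.posSemidef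
    (inv_sub_inv_psd hB hD) (inv_sub_inv_psd hA hC)
    hid1 hid2 hid3
end

section
/- For n×n positive definite complex matrices A, B and n×n positive semidefinite complex matrices C, D, one has Tr[(A−B)(B⁻¹−A⁻¹)] ≥ Tr[(A−B)(B+D)⁻¹(A−B)(A+C)⁻¹], where both traces are real numbers. -/
open Matrix ComplexOrder

lemma aux_trace_nonneg {n : ℕ} {P : Matrix (Fin n) (Fin n) ℂ} (hP : P.PosSemidef) :
    0 ≤ P.trace := by
  rw [Matrix.trace]
  apply Finset.sum_nonneg
  intro i _
  exact hP.diag_nonneg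

open scoped MatrixOrder in
lemma aux_trace_mul_nonneg {n : ℕ} {P Q : Matrix (Fin n) (Fin n) ℂ}
    (hP : P.PosSemidef) (hQ : Q.PosSemidef) : 0 ≤ (P * Q).trace := by
  have h1 : (P * Q).trace = (CFC.sqrt P * Q * CFC.sqrt P).trace := by
    conv_lhs => rw [← CFC.sqrt_mul_sqrt_self P hP.nonneg]
    rw [mul_assoc, Matrix.trace_mul_comm]
  have h2 : (CFC.sqrt P * Q * CFC.sqrt P).PosSemidef := by
    have := hQ.mul_mul_conjTranspose_same (CFC.sqrt P)
    rwa [(CFC.sqrt_nonneg P).posSemidef.isHermitian.eq] at this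
  rw [h1]; exact aux_trace_nonneg h2

lemma aux_inv_sub_inv {n : ℕ} {A C : Matrix (Fin n) (Fin n) ℂ}
    (hA : A.PosDef) (hC : C.PosSemidef) : (A⁻¹ - (A + C)⁻¹).PosSemidef := by
  have hSpd : (A + C).PosDef := hA.add_posSemidef hC
  have hAd : IsUnit A.det := isUnit_iff_ne_zero.mpr hA.det_pos.ne'
  have hSd : IsUnit (A + C).det := isUnit_iff_ne_zero.mpr hSpd.det_pos.ne'
  have key : (A + C) * A⁻¹ * (A + C) - (A + C) = C + C * A⁻¹ * C := by
    rw [add_mul, Matrix.mul_nonsing_inv _ hAd, add_mul, one_mul, mul_add,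
      Matrix.nonsing_inv_mul_cancel_right _ _ hAd]
    abel
  have hmid : (C + C * A⁻¹ * C).PosSemidef := by
    have h1 : (Cᴴ * A⁻¹ * C).PosSemidef := hA.inv.posSemidef.conjTranspose_mul_mul_same C
    rw [hC.isHermitian.eq] at h1
    exact hC.add h1
  have hconj : ((A + C)⁻¹ * (C + C * A⁻¹ * C) * ((A + C)⁻¹)ᴴ).PosSemidef :=
    hmid.mul_mul_conjTranspose_same (A + C)⁻¹
  rw [hSpd.inv.isHermitian.eq] at hconj
  have heq : (A + C)⁻¹ * (C + C * A⁻¹ * C) * (A + C)⁻¹ = A⁻¹ - (A + C)⁻¹ := by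
    rw [← key, mul_sub, sub_mul]
    simp only [← mul_assoc]
    rw [Matrix.nonsing_inv_mul _ hSd, one_mul,
      Matrix.mul_nonsing_inv_cancel_right _ _ hSd, one_mul]
  rwa [heq] at hconj

lemma aux_sandwich_trace_nonneg {n : ℕ} {X P Q : Matrix (Fin n) (Fin n) ℂ}
    (hX : X.IsHermitian) (hP : P.PosSemidef) (hQ : Q.PosSemidef) :
    0 ≤ (X * P * X * Q).trace := by
  have h1 : (X * P * Xᴴ).PosSemidef := hP.mul_mul_conjTranspose_same X
  rw [hX.eq] at h1
  exact aux_trace_mul_nonneg h1 hQ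

theorem trace_first_term_bound {n : ℕ} (A B C D : Matrix (Fin n) (Fin n) ℂ)
    (hA : A.PosDef) (hB : B.PosDef) (hC : C.PosSemidef) (hD : D.PosSemidef) :
    (((A - B) * (B⁻¹ - A⁻¹)).trace).im = 0 ∧
    (((A - B) * (B + D)⁻¹ * (A - B) * (A + C)⁻¹).trace).im = 0 ∧
    (((A - B) * (B⁻¹ - A⁻¹)).trace).re ≥
      (((A - B) * (B + D)⁻¹ * (A - B) * (A + C)⁻¹).trace).re := by
  have hX : (A - B).IsHermitian := hA.1.sub hB.1
  have hAd : IsUnit A.det := isUnit_iff_ne_zero.mpr hA.det_pos.ne'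
  have hBd : IsUnit B.det := isUnit_iff_ne_zero.mpr hB.det_pos.ne'
  have hAi : (A⁻¹).PosSemidef := hA.inv.posSemidef
  have hBDi : ((B + D)⁻¹).PosSemidef := (hB.add_posSemidef hD).inv.posSemidef
  have hACi : ((A + C)⁻¹).PosSemidef := (hA.add_posSemidef hC).inv.posSemidef
  have key0 : B⁻¹ - A⁻¹ = B⁻¹ * (A - B) * A⁻¹ := by
    rw [mul_sub, sub_mul, Matrix.mul_nonsing_inv_cancel_right _ _ hAd,
      Matrix.nonsing_inv_mul _ hBd, one_mul]
  have split : (A - B) * (B⁻¹ - A⁻¹) =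
      (A - B) * (B⁻¹ - (B + D)⁻¹) * (A - B) * A⁻¹ +
      (A - B) * (B + D)⁻¹ * (A - B) * (A⁻¹ - (A + C)⁻¹) +
      (A - B) * (B + D)⁻¹ * (A - B) * (A + C)⁻¹ := by
    rw [key0]; noncomm_ring
  have h1 : 0 ≤ ((A - B) * (B⁻¹ - (B + D)⁻¹) * (A - B) * A⁻¹).trace :=
    aux_sandwich_trace_nonneg hX (aux_inv_sub_inv hB hD) hAi
  have h2 : 0 ≤ ((A - B) * (B + D)⁻¹ * (A - B) * (A⁻¹ - (A + C)⁻¹)).trace :=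
    aux_sandwich_trace_nonneg hX hBDi (aux_inv_sub_inv hA hC)
  have h3 : 0 ≤ ((A - B) * (B + D)⁻¹ * (A - B) * (A + C)⁻¹).trace :=
    aux_sandwich_trace_nonneg hX hBDi hACi
  have htr : ((A - B) * (B⁻¹ - A⁻¹)).trace =
      ((A - B) * (B⁻¹ - (B + D)⁻¹) * (A - B) * A⁻¹).trace +
      ((A - B) * (B + D)⁻¹ * (A - B) * (A⁻¹ - (A + C)⁻¹)).trace +
      ((A - B) * (B + D)⁻¹ * (A - B) * (A + C)⁻¹).trace := by
    rw [split, Matrix.trace_add, Matrix.trace_add]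
  obtain ⟨h1re, h1im⟩ := Complex.le_def.mp h1
  obtain ⟨h2re, h2im⟩ := Complex.le_def.mp h2
  obtain ⟨h3re, h3im⟩ := Complex.le_def.mp h3
  simp only [Complex.zero_re, Complex.zero_im] at h1re h1im h2re h2im h3re h3im
  refine ⟨?_, h3im.symm, ?_⟩
  · rw [htr]; simp [← h1im, ← h2im, ← h3im]
  · rw [htr]; simp only [Complex.add_re]; linarith
end
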